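/- Assume in addition that r'(s) > 0 for all s ∈ [0, c_*]. Then for every δ ∈ (0,1) and every ε > 0 there exists H > 0 such that for every h ≥ H and every u solving BVP(h), one has 0 ≤ u(y) ≤ ε for all y ∈ [0, 1−δ]; i.e., u[h] → 0 uniformly on every compact subinterval of [0,1) as h → ∞. -/

import Mathlib

open Set MeasureTheory intervalIntegral Filter

/-- `u` (with derivative `u'` and second derivative `u''`) solves the boundary value
problem BVP(h): `(κ/h²)·u'' = r(u)` on `[0,1]`, `u'(0) = 0`,
`u(1) + (L·κ/(κ_L·h))·u'(1) = c_*`. -/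
def SolvesBVP (κ κL L cstar : ℝ) (r : ℝ → ℝ) (h : ℝ)
    (u u' u'' : ℝ → ℝ) : Prop :=
  (∀ y ∈ Icc (0:ℝ) 1, HasDerivWithinAt u (u' y) (Icc (0:ℝ) 1) y) ∧
  (∀ y ∈ Icc (0:ℝ) 1, HasDerivWithinAt u' (u'' y) (Icc (0:ℝ) 1) y) ∧
  ContinuousOn u'' (Icc (0:ℝ) 1) ∧
  (∀ y ∈ Icc (0:ℝ) 1, (κ / h ^ 2) * u'' y = r (u y)) ∧
  u' 0 = 0 ∧
  u 1 + (L * κ / (κL * h)) * u' 1 = cstar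


lemma BVPaux.upgrade {f f' : ℝ → ℝ}
    (hf : ∀ y ∈ Icc (0:ℝ) 1, HasDerivWithinAt f (f' y) (Icc (0:ℝ) 1) y)
    {x : ℝ} (hx : x ∈ Ioo (0:ℝ) 1) : HasDerivAt f (f' x) x :=
  (hf x (Ioo_subset_Icc_self hx)).hasDerivAt (Icc_mem_nhds hx.1 hx.2)

lemma BVPaux.cont {f f' : ℝ → ℝ}
    (hf : ∀ y ∈ Icc (0:ℝ) 1, HasDerivWithinAt f (f' y) (Icc (0:ℝ) 1) y) :
    ContinuousOn f (Icc (0:ℝ) 1) :=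
  fun y hy => (hf y hy).continuousWithinAt

lemma BVPaux.strictAnti {f f' : ℝ → ℝ}
    (hf : ∀ y ∈ Icc (0:ℝ) 1, HasDerivWithinAt f (f' y) (Icc (0:ℝ) 1) y)
    {a b : ℝ} (ha : 0 ≤ a) (hb : b ≤ 1)
    (hsign : ∀ y ∈ Ioo a b, f' y < 0) : StrictAntiOn f (Icc a b) := by
  have hsub : Icc a b ⊆ Icc 0 1 := Icc_subset_Icc ha hb
  apply strictAntiOn_of_deriv_neg (convex_Icc a b) ((BVPaux.cont hf).mono hsub)
  intro x hx
  rw [interior_Icc] at hx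
  have hx01 : x ∈ Ioo (0:ℝ) 1 := ⟨lt_of_le_of_lt ha hx.1, lt_of_lt_of_le hx.2 hb⟩
  rw [(BVPaux.upgrade hf hx01).deriv]
  exact hsign x hx

lemma BVPaux.strictMono {f f' : ℝ → ℝ}
    (hf : ∀ y ∈ Icc (0:ℝ) 1, HasDerivWithinAt f (f' y) (Icc (0:ℝ) 1) y)
    {a b : ℝ} (ha : 0 ≤ a) (hb : b ≤ 1)
    (hsign : ∀ y ∈ Ioo a b, 0 < f' y) : StrictMonoOn f (Icc a b) := by
  have hsub : Icc a b ⊆ Icc 0 1 := Icc_subset_Icc ha hb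
  apply strictMonoOn_of_deriv_pos (convex_Icc a b) ((BVPaux.cont hf).mono hsub)
  intro x hx
  rw [interior_Icc] at hx
  have hx01 : x ∈ Ioo (0:ℝ) 1 := ⟨lt_of_le_of_lt ha hx.1, lt_of_lt_of_le hx.2 hb⟩
  rw [(BVPaux.upgrade hf hx01).deriv]
  exact hsign x hx

lemma BVPaux.mono {f f' : ℝ → ℝ}
    (hf : ∀ y ∈ Icc (0:ℝ) 1, HasDerivWithinAt f (f' y) (Icc (0:ℝ) 1) y)
    {a b : ℝ} (ha : 0 ≤ a) (hb : b ≤ 1)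
    (hsign : ∀ y ∈ Ioo a b, 0 ≤ f' y) : MonotoneOn f (Icc a b) := by
  have hsub : Icc a b ⊆ Icc 0 1 := Icc_subset_Icc ha hb
  apply monotoneOn_of_deriv_nonneg (convex_Icc a b) ((BVPaux.cont hf).mono hsub)
  · intro x hx
    rw [interior_Icc] at hx
    have hx01 : x ∈ Ioo (0:ℝ) 1 := ⟨lt_of_le_of_lt ha hx.1, lt_of_lt_of_le hx.2 hb⟩
    exact (BVPaux.upgrade hf hx01).differentiableAt.differentiableWithinAt
  · intro x hx
    rw [interior_Icc] at hx
    have hx01 : x ∈ Ioo (0:ℝ) 1 := ⟨lt_of_le_of_lt ha hx.1, lt_of_lt_of_le hx.2 hb⟩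
    rw [(BVPaux.upgrade hf hx01).deriv]
    exact hsign x hx


lemma BVPaux.r_zero (r : ℝ → ℝ) (hrc : Continuous r)
    (hrsign : ∀ s : ℝ, s ≠ 0 → s * r s > 0) : r 0 = 0 := by
  have h1 : (0:ℝ) ≤ r 0 := by
    refine ge_of_tendsto ((hrc.tendsto 0).mono_left (nhdsWithin_le_nhds (s := Ioi (0:ℝ)))) ?_
    filter_upwards [eventually_mem_nhdsWithin] with x hx
    have hx' : (0:ℝ) < x := hx
    nlinarith [hrsign x hx'.ne']
  have h2 : r 0 ≤ 0 := by
    refine le_of_tendsto ((hrc.tendsto 0).mono_left (nhdsWithin_le_nhds (s := Iio (0:ℝ)))) ?_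
    filter_upwards [eventually_mem_nhdsWithin] with x hx
    have hx' : x < (0:ℝ) := hx
    nlinarith [hrsign x hx'.ne]
  linarith

lemma BVPaux.not_min {f f' f'' : ℝ → ℝ}
    (hf : ∀ y ∈ Icc (0:ℝ) 1, HasDerivWithinAt f (f' y) (Icc (0:ℝ) 1) y)
    (hf' : ∀ y ∈ Icc (0:ℝ) 1, HasDerivWithinAt f' (f'' y) (Icc (0:ℝ) 1) y)
    (hf'' : ContinuousOn f'' (Icc (0:ℝ) 1))
    {y0 : ℝ} (hy0 : y0 ∈ Icc (0:ℝ) 1) (hy0lt : y0 < 1)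
    (hd1 : f' y0 = 0) (hd2 : f'' y0 < 0) :
    ∃ y ∈ Icc (0:ℝ) 1, f y < f y0 := by
  have hev : f'' ⁻¹' (Iio 0) ∈ nhdsWithin y0 (Icc (0:ℝ) 1) :=
    (hf'' y0 hy0) (Iio_mem_nhds hd2)
  rw [Metric.mem_nhdsWithin_iff] at hev
  obtain ⟨ε, hε, hball⟩ := hev
  set b := min (y0 + ε/2) 1 with hb
  have hy0b : y0 < b := lt_min (by linarith) hy0lt
  have hb1 : b ≤ 1 := min_le_right _ _
  have hIcc : ∀ y ∈ Ioo y0 b, y ∈ Icc (0:ℝ) 1 :=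
    fun y hy => ⟨le_trans hy0.1 hy.1.le, le_trans hy.2.le hb1⟩
  have hneg : ∀ y ∈ Ioo y0 b, f'' y < 0 := by
    intro y hy
    refine hball ⟨?_, hIcc y hy⟩
    rw [Metric.mem_ball, Real.dist_eq, abs_of_nonneg (by linarith [hy.1])]
    have : y < y0 + ε/2 := lt_of_lt_of_le hy.2 (min_le_left _ _)
    linarith
  have hanti' : StrictAntiOn f' (Icc y0 b) := BVPaux.strictAnti hf' hy0.1 hb1 hneg
  have hf'neg : ∀ y ∈ Ioo y0 b, f' y < 0 := by
    intro y hy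
    have := hanti' (left_mem_Icc.2 hy0b.le) ⟨hy.1.le, hy.2.le⟩ hy.1
    rwa [hd1] at this
  have hanti : StrictAntiOn f (Icc y0 b) := BVPaux.strictAnti hf hy0.1 hb1 hf'neg
  exact ⟨b, ⟨le_trans hy0.1 hy0b.le, hb1⟩,
    hanti (left_mem_Icc.2 hy0b.le) (right_mem_Icc.2 hy0b.le) hy0b⟩


lemma BVPaux.deriv_nonpos_at_right {f f' : ℝ → ℝ}
    (hf : ∀ y ∈ Icc (0:ℝ) 1, HasDerivWithinAt f (f' y) (Icc (0:ℝ) 1) y)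
    (hf'c : ContinuousOn f' (Icc (0:ℝ) 1))
    (hmin : ∀ y ∈ Icc (0:ℝ) 1, f 1 ≤ f y) : f' 1 ≤ 0 := by
  by_contra hpos
  push_neg at hpos
  have hev : f' ⁻¹' (Ioi 0) ∈ nhdsWithin 1 (Icc (0:ℝ) 1) :=
    (hf'c 1 (right_mem_Icc.2 zero_le_one)) (Ioi_mem_nhds hpos)
  rw [Metric.mem_nhdsWithin_iff] at hev
  obtain ⟨ε, hε, hball⟩ := hev
  set a := max 0 (1 - ε/2) with ha
  have ha1 : a < 1 := by
    apply max_lt one_pos; linarith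
  have ha0 : 0 ≤ a := le_max_left _ _
  have hposIoo : ∀ y ∈ Ioo a 1, 0 < f' y := by
    intro y hy
    refine hball ⟨?_, ⟨le_trans ha0 hy.1.le, hy.2.le⟩⟩
    rw [Metric.mem_ball, Real.dist_eq, abs_of_nonpos (by linarith [hy.2])]
    have : 1 - ε/2 ≤ a := le_max_right _ _
    have := hy.1
    linarith
  have hsm : StrictMonoOn f (Icc a 1) := BVPaux.strictMono hf ha0 le_rfl hposIoo
  have := hsm (left_mem_Icc.2 ha1.le) (right_mem_Icc.2 ha1.le) ha1
  have := hmin a ⟨ha0, ha1.le⟩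
  linarith

lemma BVPaux.linear_lower (r : ℝ → ℝ) (hr : ContDiff ℝ 1 r) (hr0 : r 0 = 0)
    {m cstar : ℝ} (hc : 0 ≤ cstar) (hm : ∀ s ∈ Icc (0:ℝ) cstar, m ≤ deriv r s) :
    ∀ s ∈ Icc (0:ℝ) cstar, m * s ≤ r s := by
  set g : ℝ → ℝ := fun s => r s - m * s with hg
  have hd : ∀ x : ℝ, HasDerivAt g (deriv r x - m) x := by
    intro x
    have h1 : HasDerivAt r (deriv r x) x := (hr.differentiable one_ne_zero x).hasDerivAt
    have h2 : HasDerivAt (fun s : ℝ => m * s) m x := by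
      simpa using (hasDerivAt_id x).const_mul m
    exact h1.sub h2
  have hmono : MonotoneOn g (Icc (0:ℝ) cstar) := by
    apply monotoneOn_of_deriv_nonneg (convex_Icc _ _)
      (fun x _ => (hd x).continuousAt.continuousWithinAt)
      (fun x _ => (hd x).differentiableAt.differentiableWithinAt)
    intro x hx
    rw [interior_Icc] at hx
    rw [(hd x).deriv]
    have := hm x (Ioo_subset_Icc_self hx)
    linarith
  intro s hs
  have := hmono (left_mem_Icc.2 hc) hs hs.1
  simp only [hg, hr0] at this
  linarith

lemma BVPaux.max_principle {w w' w'' : ℝ → ℝ} {c : ℝ} (hcpos : 0 < c)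
    (hw : ∀ y ∈ Icc (0:ℝ) 1, HasDerivWithinAt w (w' y) (Icc (0:ℝ) 1) y)
    (hw' : ∀ y ∈ Icc (0:ℝ) 1, HasDerivWithinAt w' (w'' y) (Icc (0:ℝ) 1) y)
    (hineq : ∀ y ∈ Icc (0:ℝ) 1, c * w y ≤ w'' y)
    (hw'0 : w' 0 = 0) (hw1 : w 1 ≤ 0) :
    ∀ y ∈ Icc (0:ℝ) 1, w y ≤ 0 := by
  by_contra hcon
  push_neg at hcon
  obtain ⟨y0, hy0, hy0pos⟩ := hcon
  obtain ⟨y1, hy1, hmax⟩ := isCompact_Icc.exists_isMaxOn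
    (nonempty_Icc.2 zero_le_one) (BVPaux.cont hw)
  have hM : 0 < w y1 := lt_of_lt_of_le hy0pos (hmax hy0)
  have hy1lt : y1 < 1 := by
    rcases lt_or_eq_of_le hy1.2 with h | h
    · exact h
    · exact absurd (h ▸ hM) (not_lt.2 hw1)
  have hw'y1 : w' y1 = 0 := by
    rcases eq_or_lt_of_le hy1.1 with h | h
    · rw [← h]; exact hw'0
    · exact (hmax.isLocalMax (Icc_mem_nhds h hy1lt)).hasDerivAt_eq_zero
        (BVPaux.upgrade hw ⟨h, hy1lt⟩)
  set S : Set ℝ := Icc y1 1 ∩ w ⁻¹' (Iic 0) with hS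
  have hSclosed : IsClosed S :=
    ContinuousOn.preimage_isClosed_of_isClosed
      ((BVPaux.cont hw).mono (Icc_subset_Icc hy1.1 le_rfl)) isClosed_Icc isClosed_Iic
  have hSne : S.Nonempty := ⟨1, ⟨right_mem_Icc.2 hy1.2, hw1⟩⟩
  have hSbdd : BddBelow S := (bddBelow_Icc : BddBelow (Icc y1 1)).mono inter_subset_left
  set y2 := sInf S with hy2
  have hy2S : y2 ∈ S := hSclosed.csInf_mem hSne hSbdd
  have hy1y2 : y1 < y2 := by
    rcases eq_or_lt_of_le hy2S.1.1 with h | h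
    · exact absurd ((congrArg w h) ▸ hy2S.2 : w y1 ≤ 0) (not_le.2 hM)
    · exact h
  have hy21 : y2 ≤ 1 := hy2S.1.2
  have hmid : ∀ y ∈ Ico y1 y2, 0 < w y := by
    intro y hy
    by_contra hle
    push_neg at hle
    have : y ∈ S := ⟨⟨hy.1, le_trans hy.2.le hy21⟩, hle⟩
    exact absurd (csInf_le hSbdd this) (not_le.2 hy.2)
  have hw''pos : ∀ y ∈ Ioo y1 y2, 0 < w'' y := by
    intro y hy
    have hyIcc : y ∈ Icc (0:ℝ) 1 := ⟨le_trans hy1.1 hy.1.le, le_trans hy.2.le hy21⟩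
    have := hineq y hyIcc
    have := hmid y ⟨hy.1.le, hy.2⟩
    nlinarith
  have hsm' : StrictMonoOn w' (Icc y1 y2) := BVPaux.strictMono hw' hy1.1 hy21 hw''pos
  have hw'pos : ∀ y ∈ Ioo y1 y2, 0 < w' y := by
    intro y hy
    have := hsm' (left_mem_Icc.2 hy1y2.le) ⟨hy.1.le, hy.2.le⟩ hy.1
    rwa [hw'y1] at this
  have hsm : StrictMonoOn w (Icc y1 y2) := BVPaux.strictMono hw hy1.1 hy21 hw'pos
  have := hsm (left_mem_Icc.2 hy1y2.le) (right_mem_Icc.2 hy1y2.le) hy1y2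
  have : w y2 ≤ 0 := hy2S.2
  nlinarith [hsm (left_mem_Icc.2 hy1y2.le) (right_mem_Icc.2 hy1y2.le) hy1y2]



lemma BVPaux.nonneg {κ κL L cstar h : ℝ} {r u u' u'' : ℝ → ℝ}
    (hκ : 0 < κ) (hκL : 0 < κL) (hL : 0 < L) (hc : 0 < cstar) (hh : 0 < h)
    (hrsign : ∀ s : ℝ, s ≠ 0 → s * r s > 0)
    (hsol : SolvesBVP κ κL L cstar r h u u' u'') :
    ∀ y ∈ Icc (0:ℝ) 1, 0 ≤ u y := by
  obtain ⟨hu, hu', hu''c, heq, hbc0, hbc1⟩ := hsol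
  obtain ⟨y0, hy0, hmin⟩ := isCompact_Icc.exists_isMinOn
    (nonempty_Icc.2 zero_le_one) (BVPaux.cont hu)
  suffices hkey : 0 ≤ u y0 by
    intro y hy; exact le_trans hkey (hmin hy)
  by_contra hneg
  push_neg at hneg
  have hrneg : r (u y0) < 0 := by nlinarith [hrsign (u y0) hneg.ne]
  have hκh : 0 < κ / h ^ 2 := by positivity
  have hu''neg : u'' y0 < 0 := by nlinarith [heq y0 hy0]
  rcases lt_or_eq_of_le hy0.2 with hlt | heq1
  · have hd1 : u' y0 = 0 := by
      rcases eq_or_lt_of_le hy0.1 with h0 | h0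
      · rw [← h0]; exact hbc0
      · exact (hmin.isLocalMin (Icc_mem_nhds h0 hlt)).hasDerivAt_eq_zero
          (BVPaux.upgrade hu ⟨h0, hlt⟩)
    obtain ⟨y, hy, hlt'⟩ := BVPaux.not_min hu hu' hu''c hy0 hlt hd1 hu''neg
    exact absurd (hmin hy) (not_le.2 hlt')
  · have hminat1 : ∀ y ∈ Icc (0:ℝ) 1, u 1 ≤ u y := by
      intro y hy; rw [← heq1]; exact hmin hy
    have hd1 : u' 1 ≤ 0 :=
      BVPaux.deriv_nonpos_at_right hu (BVPaux.cont hu') hminat1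
    have hu1 : u 1 < 0 := heq1 ▸ hneg
    have hCpos : 0 < L * κ / (κL * h) := by positivity
    nlinarith [hbc1]

lemma BVPaux.bounds {κ κL L cstar h : ℝ} {r u u' u'' : ℝ → ℝ}
    (hκ : 0 < κ) (hκL : 0 < κL) (hL : 0 < L) (hc : 0 < cstar) (hh : 0 < h)
    (hr0 : r 0 = 0) (hrsign : ∀ s : ℝ, s ≠ 0 → s * r s > 0)
    (hsol : SolvesBVP κ κL L cstar r h u u' u'') :
    (∀ y ∈ Icc (0:ℝ) 1, 0 ≤ u y ∧ u y ≤ cstar) := by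
  have hnn := BVPaux.nonneg hκ hκL hL hc hh hrsign hsol
  obtain ⟨hu, hu', hu''c, heq, hbc0, hbc1⟩ := hsol
  have hrnn : ∀ y ∈ Icc (0:ℝ) 1, 0 ≤ r (u y) := by
    intro y hy
    rcases eq_or_lt_of_le (hnn y hy) with h0 | h0
    · rw [← h0, hr0]
    · nlinarith [hrsign (u y) h0.ne']
  have hu''nn : ∀ y ∈ Icc (0:ℝ) 1, 0 ≤ u'' y := by
    intro y hy
    have := heq y hy
    have hκh : 0 < κ / h ^ 2 := by positivity
    nlinarith [hrnn y hy]
  have hmono' : MonotoneOn u' (Icc (0:ℝ) 1) :=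
    BVPaux.mono hu' le_rfl le_rfl (fun y hy => hu''nn y (Ioo_subset_Icc_self hy))
  have hu'nn : ∀ y ∈ Icc (0:ℝ) 1, 0 ≤ u' y := by
    intro y hy
    have := hmono' (left_mem_Icc.2 zero_le_one) hy hy.1
    rwa [hbc0] at this
  have hmono : MonotoneOn u (Icc (0:ℝ) 1) :=
    BVPaux.mono hu le_rfl le_rfl (fun y hy => hu'nn y (Ioo_subset_Icc_self hy))
  have hCpos : 0 < L * κ / (κL * h) := by positivity
  have hu1 : u 1 ≤ cstar := by
    nlinarith [hu'nn 1 (right_mem_Icc.2 zero_le_one), hbc1]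
  intro y hy
  exact ⟨hnn y hy, le_trans (hmono hy (right_mem_Icc.2 zero_le_one) hy.2) hu1⟩


set_option maxHeartbeats 1000000 in
theorem BVP_limit_h_to_infinity
    (κ κL L cstar : ℝ) (hκ : 0 < κ) (hκL : 0 < κL) (hL : 0 < L) (hc : 0 < cstar)
    (r : ℝ → ℝ) (hr : ContDiff ℝ 1 r) (hrsign : ∀ s : ℝ, s ≠ 0 → s * r s > 0)
    (hr' : ∀ s : ℝ, 0 ≤ deriv r s)
    (hr'pos : ∀ s ∈ Icc (0:ℝ) cstar, 0 < deriv r s) :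
    ∀ δ : ℝ, δ ∈ Ioo (0:ℝ) 1 → ∀ ε > (0:ℝ), ∃ H > (0:ℝ), ∀ h : ℝ, H ≤ h →
      ∀ u u' u'' : ℝ → ℝ, SolvesBVP κ κL L cstar r h u u' u'' →
        ∀ y ∈ Icc (0:ℝ) (1 - δ), 0 ≤ u y ∧ u y ≤ ε := by
  intro δ hδ ε hε
  have hr0 : r 0 = 0 := BVPaux.r_zero r hr.continuous hrsign
  obtain ⟨s0, hs0, hs0min⟩ := isCompact_Icc.exists_isMinOn
    (nonempty_Icc.2 hc.le) (hr.continuous_deriv le_rfl).continuousOn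
  set m := deriv r s0 with hmdef
  have hm : 0 < m := hr'pos s0 hs0
  have hmle : ∀ s ∈ Icc (0:ℝ) cstar, m ≤ deriv r s := fun s hs => hs0min hs
  have hlin : ∀ s ∈ Icc (0:ℝ) cstar, m * s ≤ r s :=
    BVPaux.linear_lower r hr hr0 hc.le hmle
  set α := Real.sqrt (m / κ) with hαdef
  have hαpos : 0 < α := Real.sqrt_pos.2 (by positivity)
  have hαsq : α ^ 2 = m / κ := Real.sq_sqrt (by positivity)
  set H := max 1 (Real.log (2 * cstar / ε) / (α * δ)) with hHdef
  have hH1 : (1:ℝ) ≤ H := le_max_left _ _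
  have hHpos : (0:ℝ) < H := by linarith
  refine ⟨H, hHpos, ?_⟩
  intro h hh u u' u'' hsol
  have hhpos : 0 < h := lt_of_lt_of_le hHpos hh
  have hbounds := BVPaux.bounds hκ hκL hL hc hhpos hr0 hrsign hsol
  obtain ⟨hu, hu', hu''c, heq, hbc0, hbc1⟩ := hsol
  -- barrier function
  set ω := h * α with hωdef
  have hωpos : 0 < ω := by positivity
  have hκω : κ * ω ^ 2 = h ^ 2 * m := by
    rw [hωdef, mul_pow, hαsq]; field_simp
  set v : ℝ → ℝ := fun y => cstar * Real.cosh (ω * y) / Real.cosh ω with hvdef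
  set v' : ℝ → ℝ := fun y => cstar * (ω * Real.sinh (ω * y)) / Real.cosh ω with hv'def
  set v'' : ℝ → ℝ := fun y => cstar * (ω ^ 2 * Real.cosh (ω * y)) / Real.cosh ω with hv''def
  have hcoshpos : (0:ℝ) < Real.cosh ω := Real.cosh_pos ω
  have hinner : ∀ y : ℝ, HasDerivAt (fun t : ℝ => ω * t) ω y := by
    intro y; simpa using (hasDerivAt_id y).const_mul ω
  have hv : ∀ y : ℝ, HasDerivAt v (v' y) y := by
    intro y
    have h1 : HasDerivAt (fun t : ℝ => Real.cosh (ω * t)) (Real.sinh (ω * y) * ω) y :=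
      (Real.hasDerivAt_cosh (ω * y)).comp y (hinner y)
    have h2 := (h1.const_mul cstar).div_const (Real.cosh ω)
    exact h2.congr_deriv (by rw [hv'def]; ring)
  have hv' : ∀ y : ℝ, HasDerivAt v' (v'' y) y := by
    intro y
    have h1 : HasDerivAt (fun t : ℝ => Real.sinh (ω * t)) (Real.cosh (ω * y) * ω) y :=
      (Real.hasDerivAt_sinh (ω * y)).comp y (hinner y)
    have h2 := ((h1.const_mul ω).const_mul cstar).div_const (Real.cosh ω)
    exact h2.congr_deriv (by rw [hv''def]; ring)
  have hveq : ∀ y : ℝ, v'' y = ω ^ 2 * v y := by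
    intro y; rw [hv''def, hvdef]; ring
  -- w = u - v
  have hw : ∀ y ∈ Icc (0:ℝ) 1,
      HasDerivWithinAt (fun t => u t - v t) (u' y - v' y) (Icc (0:ℝ) 1) y :=
    fun y hy => (hu y hy).sub (hv y).hasDerivWithinAt
  have hw' : ∀ y ∈ Icc (0:ℝ) 1,
      HasDerivWithinAt (fun t => u' t - v' t) (u'' y - v'' y) (Icc (0:ℝ) 1) y :=
    fun y hy => (hu' y hy).sub (hv' y).hasDerivWithinAt
  have hineq : ∀ y ∈ Icc (0:ℝ) 1, ω ^ 2 * (u y - v y) ≤ u'' y - v'' y := by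
    intro y hy
    have e := heq y hy
    have e2 : κ * u'' y = h ^ 2 * r (u y) := by
      field_simp at e; linarith
    have hrlin : m * u y ≤ r (u y) := hlin (u y) ⟨(hbounds y hy).1, (hbounds y hy).2⟩
    have key : ω ^ 2 * u y ≤ u'' y := by
      have h3 : h ^ 2 * (m * u y) ≤ h ^ 2 * r (u y) :=
        mul_le_mul_of_nonneg_left hrlin (sq_nonneg h)
      have h5 : κ * (ω ^ 2 * u y) = h ^ 2 * (m * u y) := by
        rw [← mul_assoc, hκω]; ring
      have h4 : κ * (ω ^ 2 * u y) ≤ κ * u'' y := by linarith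
      exact le_of_mul_le_mul_left h4 hκ
    rw [hveq y]; linarith
  have hw'0 : u' 0 - v' 0 = 0 := by
    rw [hbc0, hv'def]; simp
  have hw1 : u 1 - v 1 ≤ 0 := by
    have hv1 : v 1 = cstar := by
      rw [hvdef]; simp only [mul_one]
      field_simp
    rw [hv1]
    linarith [(hbounds 1 (right_mem_Icc.2 zero_le_one)).2]
  have hcomp : ∀ y ∈ Icc (0:ℝ) 1, u y - v y ≤ 0 := by
    refine BVPaux.max_principle (by positivity : (0:ℝ) < ω ^ 2) hw hw' ?_ hw'0 hw1
    intro y hy; exact hineq y hy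
  -- final estimate
  intro y hy
  have hδ1 : 1 - δ ≤ 1 := by linarith [hδ.1]
  have hy01 : y ∈ Icc (0:ℝ) 1 := ⟨hy.1, le_trans hy.2 hδ1⟩
  refine ⟨(hbounds y hy01).1, ?_⟩
  have huv : u y ≤ v y := by linarith [hcomp y hy01]
  have hcosh1 : Real.cosh (ω * y) ≤ Real.cosh (ω * (1 - δ)) := by
    rw [Real.cosh_le_cosh]
    rw [abs_of_nonneg (mul_nonneg hωpos.le hy.1),
      abs_of_nonneg (mul_nonneg hωpos.le (by linarith [hδ.2]))]
    exact mul_le_mul_of_nonneg_left hy.2 hωpos.le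
  have hcosh2 : Real.cosh (ω * (1 - δ)) ≤ Real.exp (ω * (1 - δ)) := by
    rw [Real.cosh_eq]
    have hnn : (0:ℝ) ≤ ω * (1 - δ) := mul_nonneg hωpos.le (by linarith [hδ.2])
    have := Real.exp_le_exp.2 (by linarith : -(ω * (1 - δ)) ≤ ω * (1 - δ))
    linarith
  have hcosh3 : Real.exp ω / 2 ≤ Real.cosh ω := by
    rw [Real.cosh_eq]
    linarith [(Real.exp_pos (-ω)).le]
  have hvbound : v y ≤ 2 * cstar * Real.exp (-(ω * δ)) := by
    have hstep : v y ≤ cstar * Real.exp (ω * (1 - δ)) / (Real.exp ω / 2) := by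
      rw [hvdef]
      apply div_le_div₀ (by positivity)
        (by nlinarith [le_trans hcosh1 hcosh2, hc.le] :
          cstar * Real.cosh (ω * y) ≤ cstar * Real.exp (ω * (1 - δ)))
        (by positivity) hcosh3
    have heqexp : cstar * Real.exp (ω * (1 - δ)) / (Real.exp ω / 2)
        = 2 * cstar * Real.exp (-(ω * δ)) := by
      rw [show -(ω * δ) = ω * (1 - δ) - ω by ring, Real.exp_sub]
      field_simp
    linarith [heqexp ▸ hstep]
  have hexpsmall : Real.exp (-(ω * δ)) ≤ ε / (2 * cstar) := by
    have hαδ : 0 < α * δ := mul_pos hαpos hδ.1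
    have hlogle : Real.log (2 * cstar / ε) ≤ H * (α * δ) :=
      (div_le_iff₀ hαδ).1 (le_max_right _ _) |>.trans_eq (by ring)
    have hωδ : H * (α * δ) ≤ ω * δ := by
      rw [hωdef]; nlinarith [hδ.1, hαpos, hh]
    calc Real.exp (-(ω * δ)) ≤ Real.exp (-(Real.log (2 * cstar / ε))) :=
          Real.exp_le_exp.2 (by linarith)
      _ = ε / (2 * cstar) := by
          rw [Real.exp_neg, Real.exp_log (div_pos (by linarith) hε)]
          rw [inv_div]
  have : 2 * cstar * Real.exp (-(ω * δ)) ≤ ε := by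
    have h2c : (0:ℝ) < 2 * cstar := by positivity
    calc 2 * cstar * Real.exp (-(ω * δ)) ≤ 2 * cstar * (ε / (2 * cstar)) :=
          mul_le_mul_of_nonneg_left hexpsmall h2c.le
      _ = ε := by field_simp
  linarith
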